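/- Let $\mathbb{F}$ be a field and $m, d$ positive integers such that $(md)!/(d!)^m \neq 0$ in $\mathbb{F}$. Let $X_1,\ldots,X_m$ and $T_1,\ldots,T_m$ be finite subsets of $\mathbb{F}$ such that $|X_i - X_j| \leq 2d$ for all $i < j$ and $|T_i| \geq (m-1)d + 1$ for all $i$. Then there exist representatives $t_i \in T_i$ such that the translates $X_1 + t_1, \ldots, X_m + t_m$ are pairwise disjoint. -/

import Mathlib

open Finset Pointwise

namespace KP
open Polynomial MvPolynomial
variable {F : Type*} [Field F] {m : ℕ}


lemma lagrange_sum_pow {F : Type*} [Field F] [DecidableEq F] (T : Finset F) (k : ℕ)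
    (hk : k < T.card) :
    ∑ c ∈ T, c ^ k * (∏ s ∈ T.erase c, (c - s))⁻¹ = if k = T.card - 1 then 1 else 0 := by
  have hinj : Set.InjOn id (T : Set F) := Function.injective_id.injOn
  have hdeg : (Polynomial.X ^ k : Polynomial F).degree < T.card := by
    rw [Polynomial.degree_X_pow]; exact_mod_cast hk
  have h := Lagrange.eq_interpolate (f := (Polynomial.X ^ k : Polynomial F)) hinj hdeg
  have h2 := congrArg (fun p => Polynomial.coeff p (T.card - 1)) h
  simp only [Lagrange.interpolate_apply, Polynomial.finset_sum_coeff, Polynomial.coeff_X_pow,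
    Polynomial.coeff_C_mul, id, Polynomial.eval_pow, Polynomial.eval_X] at h2
  have hlc : ∀ c ∈ T, (Lagrange.basis T id c).coeff (T.card - 1)
      = (∏ s ∈ T.erase c, (c - s))⁻¹ := by
    intro c hc
    have hnd := Lagrange.natDegree_basis hinj hc
    have h3 : (Lagrange.basis T id c).coeff (T.card - 1) = (Lagrange.basis T id c).leadingCoeff := by
      rw [Polynomial.leadingCoeff, hnd]
    rw [h3, Lagrange.basis, Polynomial.leadingCoeff_prod, ← Finset.prod_inv_distrib]
    refine Finset.prod_congr rfl fun j hj => ?_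
    rw [Lagrange.basisDivisor, leadingCoeff_mul, leadingCoeff_C, leadingCoeff_X_sub_C, mul_one, id,
      id]
  have h4 : ∑ c ∈ T, c ^ k * (∏ s ∈ T.erase c, (c - s))⁻¹
      = ∑ x ∈ T, x ^ k * (Lagrange.basis T id x).coeff (T.card - 1) :=
    Finset.sum_congr rfl fun c hc => by rw [hlc c hc]
  rw [h4, ← h2]
  simp [eq_comm]




lemma coeff_eq_sum_grid {F : Type*} [Field F] [DecidableEq F] {m : ℕ}
    (d : Fin m → ℕ) (T : Fin m → Finset F) (hT : ∀ i, (T i).card = d i + 1)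
    (f : MvPolynomial (Fin m) F) (hdeg : f.totalDegree ≤ ∑ i, d i) :
    MvPolynomial.coeff (Finsupp.equivFunOnFinite.symm d) f
      = ∑ t ∈ Fintype.piFinset T, MvPolynomial.eval t f
          * ∏ i, (∏ s ∈ (T i).erase (t i), (t i - s))⁻¹ := by
  classical
  set D : (Fin m) →₀ ℕ := Finsupp.equivFunOnFinite.symm d with hD
  have hDi : ∀ i, D i = d i := fun i => rfl
  set w : Fin m → F → F := fun i c => (∏ s ∈ (T i).erase c, (c - s))⁻¹ with hw
  have key : ∀ α ∈ f.support,
      (∏ i, ∑ c ∈ T i, c ^ (α i) * w i c) = if α = D then 1 else 0 := by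
    intro α hα
    by_cases hαD : α = D
    · rw [if_pos hαD, hαD]
      apply Finset.prod_eq_one
      intro i _
      rw [hDi, lagrange_sum_pow _ _ (by rw [hT]; omega), if_pos (by rw [hT]; omega)]
    · rw [if_neg hαD]
      have hsum : ∑ i, α i ≤ ∑ i, d i := by
        refine le_trans ?_ hdeg
        have h1 : ∑ i ∈ α.support, α i ≤ f.totalDegree := MvPolynomial.le_totalDegree hα
        refine le_trans (le_of_eq ?_) h1
        exact (Finset.sum_subset (Finset.subset_univ _)
          (fun i _ hi => Finsupp.notMem_support_iff.mp hi)).symm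
      have hex : ∃ i, α i < d i := by
        by_contra hcon
        push_neg at hcon
        apply hαD
        ext i
        exact le_antisymm ((Finset.sum_eq_sum_iff_of_le (fun i _ => hcon i)).mp
          (le_antisymm (Finset.sum_le_sum (fun i _ => hcon i)) hsum) i (mem_univ i)).symm.le
          (hcon i)
      obtain ⟨i, hi⟩ := hex
      apply Finset.prod_eq_zero (Finset.mem_univ i)
      rw [lagrange_sum_pow _ _ (by rw [hT]; omega), if_neg (by rw [hT]; omega)]
  have expand : ∀ t ∈ Fintype.piFinset T, MvPolynomial.eval t f * ∏ i, w i (t i)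
      = ∑ α ∈ f.support, coeff α f * ∏ i, ((t i) ^ (α i) * w i (t i)) := by
    intro t _
    rw [MvPolynomial.eval_eq', Finset.sum_mul]
    refine Finset.sum_congr rfl fun α _ => ?_
    rw [mul_assoc, ← Finset.prod_mul_distrib]
  rw [Finset.sum_congr rfl expand, Finset.sum_comm]
  have swap : ∀ α ∈ f.support,
      ∑ t ∈ Fintype.piFinset T, coeff α f * ∏ i, ((t i) ^ (α i) * w i (t i))
        = coeff α f * (if α = D then 1 else 0) := by
    intro α hα
    rw [← Finset.mul_sum, ← Finset.prod_univ_sum T (fun i c => c ^ α i * w i c), key α hα]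
  rw [Finset.sum_congr rfl swap]
  simp only [mul_ite, mul_one, mul_zero, Finset.sum_ite_eq' f.support D]
  by_cases hDs : D ∈ f.support
  · rw [if_pos hDs]
  · rw [if_neg hDs, MvPolynomial.notMem_support_iff.mp hDs]




lemma CN {F : Type*} [Field F] [DecidableEq F] {m : ℕ} (d : Fin m → ℕ) (T : Fin m → Finset F)
    (hT : ∀ i, d i + 1 ≤ (T i).card) (f : MvPolynomial (Fin m) F)
    (hdeg : f.totalDegree ≤ ∑ i, d i)
    (hc : MvPolynomial.coeff (Finsupp.equivFunOnFinite.symm d) f ≠ 0) :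
    ∃ t : Fin m → F, (∀ i, t i ∈ T i) ∧ MvPolynomial.eval t f ≠ 0 := by
  classical
  have h := fun i => Finset.exists_subset_card_eq (hT i)
  choose T' hsub hcard using h
  by_contra hcon
  push_neg at hcon
  apply hc
  rw [coeff_eq_sum_grid d T' hcard f hdeg]
  refine Finset.sum_eq_zero fun t ht => ?_
  have hmem : ∀ i, t i ∈ T i := fun i => hsub i (Fintype.mem_piFinset.mp ht i)
  rw [hcon t hmem, zero_mul]

noncomputable def Cpoly (s : Finset (Fin m)) (i : Fin m) : MvPolynomial (Fin m) F :=
  ∏ j ∈ s.erase i, (X j - X i)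

noncomputable def Qpoly (s : Finset (Fin m)) (a : Fin m → ℕ) : MvPolynomial (Fin m) F :=
  ∏ i ∈ s, (Cpoly s i) ^ a i

noncomputable def mu (s : Finset (Fin m)) (a : Fin m → ℕ) : Fin m →₀ ℕ :=
  ∑ j ∈ s, Finsupp.single j ((∑ i ∈ s, a i) - a j)





lemma lagrange_poly_identity (s : Finset (Fin m)) (hs : s.Nonempty) :
    (∏ l ∈ s, Cpoly (F := F) s l)
      = ∑ k ∈ s, (∏ j ∈ s.erase k, X j) * ∏ l ∈ s.erase k, Cpoly s l := by
  classical
  set K := FractionRing (MvPolynomial (Fin m) F)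
  set φ := algebraMap (MvPolynomial (Fin m) F) K with hφdef
  have hφ : Function.Injective φ := IsFractionRing.injective _ _
  apply hφ
  set v : Fin m → K := fun j => φ (X j) with hv
  have hvinj : Function.Injective v := fun i j h => X_injective (hφ h)
  have hinj : Set.InjOn v s := hvinj.injOn
  have hφC : ∀ k, φ (Cpoly s k) = ∏ l ∈ s.erase k, (v l - v k) := by
    intro k
    rw [Cpoly, map_prod]
    exact Finset.prod_congr rfl fun l _ => by rw [map_sub]
  have hCne : ∀ k ∈ s, φ (Cpoly s k) ≠ 0 := by
    intro k hk
    rw [hφC]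
    refine Finset.prod_ne_zero_iff.mpr fun l hl => sub_ne_zero.mpr ?_
    exact fun h => (Finset.ne_of_mem_erase hl) (hvinj h)
  have hsum := Lagrange.sum_basis hinj hs
  have heval := congrArg (Polynomial.eval (0 : K)) hsum
  rw [Polynomial.eval_finset_sum, Polynomial.eval_one] at heval
  have hbasis : ∀ k ∈ s, Polynomial.eval (0 : K) (Lagrange.basis s v k)
      = (∏ l ∈ s.erase k, v l) * (φ (Cpoly s k))⁻¹ := by
    intro k hk
    rw [Lagrange.basis, Polynomial.eval_prod, hφC, ← Finset.prod_inv_distrib,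
      ← Finset.prod_mul_distrib]
    refine Finset.prod_congr rfl fun l hl => ?_
    rw [Lagrange.basisDivisor, Polynomial.eval_mul, Polynomial.eval_C, Polynomial.eval_sub,
      Polynomial.eval_X, Polynomial.eval_C, zero_sub]
    rw [mul_comm, ← neg_sub (v l) (v k), inv_neg]
    ring
  rw [Finset.sum_congr rfl hbasis] at heval
  -- multiply heval by ∏_{l∈s} φ (Cpoly s l)
  have key := congrArg (· * ∏ l ∈ s, φ (Cpoly (F := F) s l)) heval
  simp only [one_mul, Finset.sum_mul] at key
  rw [Finset.sum_mul] at key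
  rw [map_prod, map_sum]
  rw [← key]
  refine Finset.sum_congr rfl fun k hk => ?_
  rw [map_mul, map_prod, map_prod]
  have hsplit : (∏ l ∈ s, φ (Cpoly (F := F) s l))
      = φ (Cpoly s k) * ∏ l ∈ s.erase k, φ (Cpoly s l) := (Finset.mul_prod_erase s _ hk).symm
  rw [hsplit, mul_assoc, inv_mul_cancel_left₀ (hCne k hk)]




lemma sum_single_apply (s : Finset (Fin m)) (c : Fin m → ℕ) (t : Fin m) :
    (∑ j ∈ s, Finsupp.single j (c j)) t = if t ∈ s then c t else 0 := by
  classical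
  rw [Finset.sum_apply']
  rw [Finset.sum_congr rfl (fun j _ => Finsupp.single_apply)]
  simp [eq_comm]

lemma degree_eq_sum_univ (ν : Fin m →₀ ℕ) : ν.degree = ∑ t, ν t :=
  Finset.sum_subset (Finset.subset_univ _)
    (fun t _ h => Finsupp.notMem_support_iff.mp h)

lemma eq_single_of_degree (ν : Fin m →₀ ℕ) (k : Fin m) (A : ℕ) (hdeg : ν.degree = A)
    (hk : ν k = A) : ν = Finsupp.single k A := by
  rw [degree_eq_sum_univ, ← Finset.add_sum_erase _ _ (Finset.mem_univ k), hk] at hdeg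
  have hz : ∀ t ∈ Finset.univ.erase k, ν t = 0 :=
    Finset.sum_eq_zero_iff.mp (by omega)
  ext t
  rw [Finsupp.single_apply]
  by_cases ht : k = t
  · subst ht; rwa [if_pos rfl]
  · rw [if_neg ht]
    exact hz t (Finset.mem_erase.mpr ⟨Ne.symm ht, Finset.mem_univ t⟩)

lemma coeff_single_mul {P Q : MvPolynomial (Fin m) F} {p q : ℕ} (k : Fin m)
    (hP : P.IsHomogeneous p) (hQ : Q.IsHomogeneous q) :
    MvPolynomial.coeff (Finsupp.single k (p + q)) (P * Q)
      = MvPolynomial.coeff (Finsupp.single k p) P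
        * MvPolynomial.coeff (Finsupp.single k q) Q := by
  classical
  rw [MvPolynomial.coeff_mul]
  refine Finset.sum_eq_single_of_mem (Finsupp.single k p, Finsupp.single k q)
    (Finset.HasAntidiagonal.mem_antidiagonal.mpr (Finsupp.single_add k p q).symm) ?_
  rintro ⟨ν, ρ⟩ hmem hne
  rw [Finset.HasAntidiagonal.mem_antidiagonal] at hmem
  by_contra hzero
  have hν : MvPolynomial.coeff ν P ≠ 0 := left_ne_zero_of_mul hzero
  have hρ : MvPolynomial.coeff ρ Q ≠ 0 := right_ne_zero_of_mul hzero
  have hνd : ν.degree = p := by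
    by_contra h; exact hν (hP.coeff_eq_zero h)
  have hρd : ρ.degree = q := by
    by_contra h; exact hρ (hQ.coeff_eq_zero h)
  have happ : ∀ t, ν t + ρ t = (Finsupp.single k (p + q)) t := by
    intro t; rw [← hmem]; rfl
  have hνk : ν k = p ∧ ρ k = q := by
    have h1 := happ k
    rw [Finsupp.single_apply, if_pos rfl] at h1
    have h2 : ν k ≤ ν.degree := by
      rw [degree_eq_sum_univ]
      exact Finset.single_le_sum (fun t _ => Nat.zero_le _) (Finset.mem_univ k)
    have h3 : ρ k ≤ ρ.degree := by
      rw [degree_eq_sum_univ]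
      exact Finset.single_le_sum (fun t _ => Nat.zero_le _) (Finset.mem_univ k)
    omega
  exact hne (Prod.ext (eq_single_of_degree ν k p hνd hνk.1)
    (eq_single_of_degree ρ k q hρd hνk.2))

lemma homog_lin (k i : Fin m) : (X k - X i : MvPolynomial (Fin m) F).IsHomogeneous 1 :=
  (isHomogeneous_X F k).sub (isHomogeneous_X F i)

lemma homog_P1 (s' : Finset (Fin m)) (k : Fin m) (a : Fin m → ℕ) :
    (∏ i ∈ s', (X k - X i) ^ a i : MvPolynomial (Fin m) F).IsHomogeneous (∑ i ∈ s', a i) :=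
  IsHomogeneous.prod s' _ a (fun i _ => by simpa using (homog_lin k i).pow (a i))

lemma coeff_single_lin (k i : Fin m) (hik : i ≠ k) :
    MvPolynomial.coeff (Finsupp.single k 1) (X k - X i : MvPolynomial (Fin m) F) = 1 := by
  classical
  rw [MvPolynomial.coeff_sub, MvPolynomial.coeff_X_same, MvPolynomial.coeff_X', if_neg, sub_zero]
  intro h
  rcases (Finsupp.single_eq_single_iff _ _ _ _).mp h with ⟨h1, _⟩ | ⟨h1, _⟩
  · exact hik h1
  · exact one_ne_zero h1

lemma coeff_single_lin_pow (k i : Fin m) (hik : i ≠ k) (e : ℕ) :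
    MvPolynomial.coeff (Finsupp.single k e) ((X k - X i) ^ e : MvPolynomial (Fin m) F) = 1 := by
  induction e with
  | zero => simpa using MvPolynomial.coeff_zero_one (R := F) (σ := Fin m)
  | succ e ih =>
    rw [pow_succ, coeff_single_mul k (by simpa using (homog_lin k i).pow e) (homog_lin k i), ih,
      coeff_single_lin k i hik, mul_one]

lemma coeff_leading (s' : Finset (Fin m)) (k : Fin m) (hk : k ∉ s') (a : Fin m → ℕ) :
    MvPolynomial.coeff (Finsupp.single k (∑ i ∈ s', a i))
      (∏ i ∈ s', (X k - X i) ^ a i : MvPolynomial (Fin m) F) = 1 := by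
  classical
  induction s' using Finset.cons_induction with
  | empty => simpa using MvPolynomial.coeff_zero_one (R := F) (σ := Fin m)
  | cons i s' hi ih =>
    have hki : k ≠ i := fun h => hk (h ▸ Finset.mem_cons_self i s')
    have hks' : k ∉ s' := fun h => hk (Finset.mem_cons_of_mem h)
    rw [Finset.prod_cons, Finset.sum_cons,
      coeff_single_mul k (by simpa using (homog_lin k i).pow (a i)) (homog_P1 s' k a),
      coeff_single_lin_pow k i (Ne.symm hki), ih hks', mul_one]

lemma multinomial_pascal (s : Finset (Fin m)) (hs : s.Nonempty) (a : Fin m → ℕ)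
    (ha : ∀ k ∈ s, 1 ≤ a k) :
    ∑ k ∈ s, Nat.multinomial s (Function.update a k (a k - 1)) = Nat.multinomial s a := by
  classical
  set A := ∑ i ∈ s, a i with hA
  obtain ⟨k₀, hk₀⟩ := hs
  have hA1 : 1 ≤ A :=
    le_trans (ha k₀ hk₀) (Finset.single_le_sum (fun i _ => Nat.zero_le _) hk₀)
  set P := ∏ i ∈ s, (a i).factorial with hP
  have hPpos : 0 < P := Finset.prod_pos fun i _ => Nat.factorial_pos _
  apply Nat.eq_of_mul_eq_mul_left hPpos
  rw [Finset.mul_sum]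
  have hterm : ∀ k ∈ s, P * Nat.multinomial s (Function.update a k (a k - 1))
      = a k * (A - 1).factorial := by
    intro k hk
    have hPk : P = a k * ∏ i ∈ s, (Function.update a k (a k - 1) i).factorial := by
      have hfu : ∀ i, (Function.update a k (a k - 1) i).factorial
          = Function.update (fun i => (a i).factorial) k ((a k - 1).factorial) i := fun i =>
        Function.apply_update (fun _ n => n.factorial) a k (a k - 1) i
      rw [Finset.prod_congr rfl (fun i _ => hfu i), Finset.prod_update_of_mem hk,
        Finset.sdiff_singleton_eq_erase, ← mul_assoc, Nat.mul_factorial_pred (Nat.one_le_iff_ne_zero.mp (ha k hk)),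
        hP, ← Finset.mul_prod_erase s _ hk]
    have hsum : ∑ i ∈ s, Function.update a k (a k - 1) i = A - 1 := by
      rw [Finset.sum_update_of_mem hk, Finset.sdiff_singleton_eq_erase, hA,
        ← Finset.add_sum_erase s a hk]
      have := ha k hk
      omega
    rw [hPk, mul_assoc, Nat.multinomial_spec, hsum]
  rw [Finset.sum_congr rfl hterm, ← Finset.sum_mul, ← hA]
  rw [hP, Nat.multinomial_spec]
  exact (Nat.mul_factorial_pred (Nat.one_le_iff_ne_zero.mp hA1))










lemma mu_apply (s : Finset (Fin m)) (a : Fin m → ℕ) (t : Fin m) :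
    mu s a t = if t ∈ s then (∑ i ∈ s, a i) - a t else 0 :=
  sum_single_apply s _ t

lemma vars_Cpoly (s : Finset (Fin m)) (i : Fin m) (hi : i ∈ s) :
    (Cpoly (F := F) s i).vars ⊆ s := by
  classical
  refine subset_trans (vars_prod _) ?_
  intro t ht
  obtain ⟨j, hj, htj⟩ := Finset.mem_biUnion.mp ht
  have := MvPolynomial.vars_sub_subset (X j) (q := (X i : MvPolynomial (Fin m) F)) htj
  rw [MvPolynomial.vars_X, MvPolynomial.vars_X] at this
  rcases Finset.mem_union.mp this with h | h
  · exact (Finset.mem_singleton.mp h) ▸ (Finset.mem_of_mem_erase hj)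
  · exact (Finset.mem_singleton.mp h) ▸ hi

lemma vars_Qpoly (s : Finset (Fin m)) (a : Fin m → ℕ) :
    (Qpoly (F := F) s a).vars ⊆ s := by
  classical
  refine subset_trans (vars_prod _) ?_
  intro t ht
  obtain ⟨i, hi, hti⟩ := Finset.mem_biUnion.mp ht
  exact vars_Cpoly s i hi (MvPolynomial.vars_pow _ _ hti)

lemma coeff_zero_of_var (P : MvPolynomial (Fin m) F) (k : Fin m) (hk : k ∉ P.vars)
    (ρ : Fin m →₀ ℕ) (hρ : MvPolynomial.coeff ρ P ≠ 0) : ρ k = 0 := by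
  by_contra h
  exact hk ((MvPolynomial.mem_vars k).mpr
    ⟨ρ, MvPolynomial.mem_support_iff.mpr hρ, Finsupp.mem_support_iff.mpr h⟩)










lemma dyson_base (a : Fin m → ℕ) :
    MvPolynomial.coeff (mu ∅ a) (Qpoly (F := F) ∅ a) = (Nat.multinomial ∅ a : F) := by
  rw [mu, Qpoly, Finset.sum_empty, Finset.prod_empty, MvPolynomial.coeff_zero_one]
  simp [Nat.multinomial]


theorem dyson_coeff (n : ℕ) : ∀ (s : Finset (Fin m)) (a : Fin m → ℕ),
    (∑ i ∈ s, a i) + s.card ≤ n →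
    MvPolynomial.coeff (mu s a) (Qpoly (F := F) s a) = (Nat.multinomial s a : F) := by
  classical
  induction n with
  | zero =>
    intro s a h
    have hs : s = ∅ := Finset.card_eq_zero.mp (by omega)
    subst hs; exact dyson_base a
  | succ n ih =>
    intro s a hn
    rcases s.eq_empty_or_nonempty with rfl | hs
    · exact dyson_base a
    by_cases hzero : ∃ k ∈ s, a k = 0
    · -- boundary case: drop index k
      obtain ⟨k, hk, hak⟩ := hzero
      have hks' : k ∉ s.erase k := Finset.notMem_erase k s
      have hA' : ∑ i ∈ s.erase k, a i = ∑ i ∈ s, a i := by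
        rw [← Finset.add_sum_erase s a hk, hak, zero_add]
      have hQsplit : Qpoly (F := F) s a
          = (∏ i ∈ s.erase k, (X k - X i) ^ a i) * Qpoly (s.erase k) a := by
        rw [Qpoly, ← Finset.mul_prod_erase s _ hk, hak, pow_zero, one_mul, Qpoly,
          ← Finset.prod_mul_distrib]
        refine Finset.prod_congr rfl fun i hi => ?_
        rw [← mul_pow]
        congr 1
        rw [Cpoly, Cpoly, ← Finset.mul_prod_erase (s.erase i) _
          (Finset.mem_erase.mpr ⟨Ne.symm (Finset.mem_erase.mp hi).1, hk⟩),
          Finset.erase_right_comm]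
      have hmuk : mu (s.erase k) a k = 0 := by rw [mu_apply, if_neg hks']
      have hmusk : mu s a k = ∑ i ∈ s, a i := by
        rw [mu_apply, if_pos hk, hak, Nat.sub_zero]
      have hmu : mu s a = Finsupp.single k (∑ i ∈ s, a i) + mu (s.erase k) a := by
        ext t
        rw [Finsupp.add_apply, mu_apply, mu_apply, Finsupp.single_apply, hA']
        by_cases htk : t = k
        · subst htk
          rw [if_pos rfl, if_pos hk, if_neg hks', hak]
          omega
        · rw [if_neg (show ¬(k = t) from fun h => htk h.symm)]
          by_cases hts : t ∈ s
          · rw [if_pos hts, if_pos (Finset.mem_erase.mpr ⟨htk, hts⟩), zero_add]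
          · rw [if_neg hts, if_neg (fun h => hts (Finset.mem_of_mem_erase h)), zero_add]
      have hhom : (∏ i ∈ s.erase k, (X k - X i) ^ a i :
          MvPolynomial (Fin m) F).IsHomogeneous (∑ i ∈ s, a i) := by
        rw [← hA']
        exact homog_P1 (s.erase k) k a
      have hfree : ∀ ρ : Fin m →₀ ℕ, MvPolynomial.coeff ρ (Qpoly (F := F) (s.erase k) a) ≠ 0 →
          ρ k = 0 := fun ρ hρ =>
        coeff_zero_of_var _ k (fun h => hks' (vars_Qpoly (s.erase k) a h)) ρ hρ
      rw [hQsplit, MvPolynomial.coeff_mul]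
      have hpairmem : (Finsupp.single k (∑ i ∈ s, a i), mu (s.erase k) a)
          ∈ Finset.HasAntidiagonal.antidiagonal (mu s a) := Finset.HasAntidiagonal.mem_antidiagonal.mpr hmu.symm
      rw [Finset.sum_eq_single_of_mem _ hpairmem ?other]
      · have hl : MvPolynomial.coeff (Finsupp.single k (∑ i ∈ s, a i))
            (∏ i ∈ s.erase k, (X k - X i) ^ a i : MvPolynomial (Fin m) F) = 1 := by
          rw [← hA']
          exact coeff_leading (s.erase k) k hks' a
        rw [hl, one_mul, ih (s.erase k) a ?meas]
        · congr 1
          rw [Nat.multinomial, Nat.multinomial, hA', ← Finset.mul_prod_erase s _ hk, hak,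
            Nat.factorial_zero, one_mul]
        case meas =>
          have hcard : (s.erase k).card + 1 = s.card := Finset.card_erase_add_one hk
          omega
      case other =>
        rintro ⟨ν, ρ⟩ hmem hne
        rw [Finset.HasAntidiagonal.mem_antidiagonal] at hmem
        by_contra hzero'
        have hν : MvPolynomial.coeff ν (∏ i ∈ s.erase k, (X k - X i) ^ a i :
            MvPolynomial (Fin m) F) ≠ 0 := left_ne_zero_of_mul hzero'
        have hρ : MvPolynomial.coeff ρ (Qpoly (F := F) (s.erase k) a) ≠ 0 :=
          right_ne_zero_of_mul hzero'
        have hρk : ρ k = 0 := hfree ρ hρ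
        have hνdeg : ν.degree = ∑ i ∈ s, a i := by
          by_contra h; exact hν (hhom.coeff_eq_zero h)
        have hνk : ν k = ∑ i ∈ s, a i := by
          have h5 := congrArg (fun f => f k) hmem
          simp only [Finsupp.add_apply] at h5
          rw [hmusk] at h5
          omega
        have hνeq : ν = Finsupp.single k (∑ i ∈ s, a i) :=
          eq_single_of_degree ν k _ hνdeg hνk
        apply hne
        have hρeq : ρ = mu (s.erase k) a := by
          have h6 := hmu ▸ hmem
          rw [hνeq] at h6
          exact add_left_cancel h6
        rw [hνeq, hρeq]
    · -- main case
      push_neg at hzero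
      have ha1 : ∀ k ∈ s, 1 ≤ a k := fun k hk => Nat.one_le_iff_ne_zero.mpr (hzero k hk)
      obtain ⟨k₀, hk₀⟩ := id hs
      have hA1 : 1 ≤ ∑ i ∈ s, a i :=
        le_trans (ha1 k₀ hk₀) (Finset.single_le_sum (fun i _ => Nat.zero_le _) hk₀)
      have hstep1 : Qpoly (F := F) s a
          = (∏ i ∈ s, Cpoly s i ^ (a i - 1)) * ∏ l ∈ s, Cpoly s l := by
        rw [Qpoly, ← Finset.prod_mul_distrib]
        refine Finset.prod_congr rfl fun i hi => ?_
        rw [← pow_succ, Nat.sub_add_cancel (ha1 i hi)]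
      have hstep2 : ∀ k ∈ s, (∏ i ∈ s, Cpoly s i ^ (a i - 1)) * ∏ l ∈ s.erase k, Cpoly s l
          = Qpoly (F := F) s (Function.update a k (a k - 1)) := by
        intro k hk
        rw [Qpoly, ← Finset.mul_prod_erase s (fun i => Cpoly s i ^ Function.update a k (a k - 1) i) hk,
          Function.update_self, ← Finset.mul_prod_erase s (fun i => Cpoly s i ^ (a i - 1)) hk,
          mul_assoc, ← Finset.prod_mul_distrib]
        congr 1
        refine Finset.prod_congr rfl fun i hi => ?_
        rw [Function.update_of_ne (Finset.mem_erase.mp hi).1, ← pow_succ,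
          Nat.sub_add_cancel (ha1 i (Finset.mem_of_mem_erase hi))]
      have hQ : Qpoly (F := F) s a = ∑ k ∈ s, (∏ j ∈ s.erase k, X j)
          * Qpoly s (Function.update a k (a k - 1)) := by
        rw [hstep1, lagrange_poly_identity s hs, Finset.mul_sum]
        refine Finset.sum_congr rfl fun k hk => ?_
        rw [← hstep2 k hk]
        ring
      rw [hQ, MvPolynomial.coeff_sum]
      have hterm : ∀ k ∈ s, MvPolynomial.coeff (mu s a)
          ((∏ j ∈ s.erase k, X j) * Qpoly (F := F) s (Function.update a k (a k - 1)))
          = (Nat.multinomial s (Function.update a k (a k - 1)) : F) := by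
        intro k hk
        have hsum' : ∑ i ∈ s, Function.update a k (a k - 1) i = (∑ i ∈ s, a i) - 1 := by
          rw [Finset.sum_update_of_mem hk, Finset.sdiff_singleton_eq_erase,
            ← Finset.add_sum_erase s a hk]
          have := ha1 k hk
          omega
        have hM : (∏ j ∈ s.erase k, (X j : MvPolynomial (Fin m) F))
            = monomial (∑ j ∈ s.erase k, Finsupp.single j 1) 1 := by
          induction (s.erase k) using Finset.cons_induction with
          | empty => simp
          | cons j t hj ihj =>
            rw [Finset.prod_cons, Finset.sum_cons, ihj, MvPolynomial.X,
              MvPolynomial.monomial_mul, one_mul]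
        have hmu2 : mu s a = (∑ j ∈ s.erase k, Finsupp.single j 1)
            + mu s (Function.update a k (a k - 1)) := by
          ext t
          rw [Finsupp.add_apply, mu_apply, mu_apply, sum_single_apply, hsum']
          have hak1 : 1 ≤ a k := ha1 k hk
          have hakA : a k ≤ ∑ i ∈ s, a i :=
            Finset.single_le_sum (fun i _ => Nat.zero_le _) hk
          by_cases hts : t ∈ s
          · by_cases htk : t = k
            · subst htk
              rw [if_neg (Finset.notMem_erase t s), if_pos hts, if_pos hts,
                Function.update_self, zero_add]
              omega
            · have htA : a t + a k ≤ ∑ i ∈ s, a i := by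
                rw [← Finset.add_sum_erase s a hk]
                have h7 := Finset.single_le_sum (f := a) (fun i _ => Nat.zero_le _)
                  (Finset.mem_erase.mpr ⟨htk, hts⟩)
                omega
              rw [if_pos (Finset.mem_erase.mpr ⟨htk, hts⟩), if_pos hts, if_pos hts,
                Function.update_of_ne htk]
              omega
          · rw [if_neg (fun h => hts (Finset.mem_of_mem_erase h)), if_neg hts, if_neg hts]
        rw [hmu2, hM, MvPolynomial.coeff_monomial_mul, one_mul]
        apply ih
        have hcard1 : 1 ≤ s.card := Finset.card_pos.mpr ⟨k, hk⟩
        omega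
      rw [Finset.sum_congr rfl hterm, ← Nat.cast_sum]
      rw [multinomial_pascal s hs a ha1]





lemma erase_eq_Ioi_union_Iio (i : Fin m) :
    Finset.univ.erase i = Finset.Ioi i ∪ Finset.Iio i := by
  ext j
  simp only [Finset.mem_erase, Finset.mem_univ, and_true, Finset.mem_union, Finset.mem_Ioi,
    Finset.mem_Iio, ne_iff_lt_or_gt]
  tauto

lemma Ioi_disjoint_Iio (i : Fin m) : Disjoint (Finset.Ioi i) (Finset.Iio i) := by
  rw [Finset.disjoint_left]
  intro j hj hj'
  exact absurd (lt_trans (Finset.mem_Ioi.mp hj) (Finset.mem_Iio.mp hj')) (lt_irrefl i)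

lemma prod_Iio_swap {β : Type*} [CommMonoid β] (g : Fin m → Fin m → β) :
    ∏ i, ∏ j ∈ Finset.Iio i, g i j = ∏ i, ∏ j ∈ Finset.Ioi i, g j i := by
  rw [Finset.prod_sigma', Finset.prod_sigma']
  refine Finset.prod_nbij' (fun x => ⟨x.2, x.1⟩) (fun x => ⟨x.2, x.1⟩) ?_ ?_ ?_ ?_ ?_ <;>
    simp [Finset.mem_sigma]

lemma sum_Iio_swap {β : Type*} [AddCommMonoid β] (g : Fin m → Fin m → β) :
    ∑ i, ∑ j ∈ Finset.Iio i, g i j = ∑ i, ∑ j ∈ Finset.Ioi i, g j i := by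
  rw [Finset.sum_sigma', Finset.sum_sigma']
  refine Finset.sum_nbij' (fun x => ⟨x.2, x.1⟩) (fun x => ⟨x.2, x.1⟩) ?_ ?_ ?_ ?_ ?_ <;>
    simp [Finset.mem_sigma]

lemma two_mul_N (hm : 0 < m) :
    2 * (∑ i : Fin m, (Finset.Ioi i).card) = m * (m - 1) := by
  have h1 : ∀ i : Fin m, (Finset.Ioi i).card + (Finset.Iio i).card = m - 1 := by
    intro i
    rw [← Finset.card_union_of_disjoint (Ioi_disjoint_Iio i), ← erase_eq_Ioi_union_Iio,
      Finset.card_erase_of_mem (Finset.mem_univ i), Finset.card_univ, Fintype.card_fin]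
  have h2 : ∑ i : Fin m, (Finset.Iio i).card = ∑ i : Fin m, (Finset.Ioi i).card := by
    calc ∑ i : Fin m, (Finset.Iio i).card = ∑ i : Fin m, ∑ _j ∈ Finset.Iio i, 1 := by
          simp
      _ = ∑ i : Fin m, ∑ _j ∈ Finset.Ioi i, 1 := sum_Iio_swap (fun _ _ => 1)
      _ = ∑ i : Fin m, (Finset.Ioi i).card := by simp
  have h3 : ∑ i : Fin m, ((Finset.Ioi i).card + (Finset.Iio i).card) = m * (m - 1) := by
    rw [Finset.sum_congr rfl (fun i _ => h1 i), Finset.sum_const, Finset.card_univ,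
      Fintype.card_fin, smul_eq_mul]
  rw [Finset.sum_add_distrib, h2] at h3
  omega





noncomputable def psi (Dset : Finset F) (dd : ℕ) : Polynomial F :=
  (∏ a ∈ Dset, (Polynomial.X - Polynomial.C a)) * Polynomial.X ^ (dd - Dset.card)

lemma psi_monic (Dset : Finset F) (dd : ℕ) : (psi Dset dd).Monic :=
  (Polynomial.monic_prod_of_monic _ _ fun a _ => Polynomial.monic_X_sub_C a).mul
    (Polynomial.monic_X_pow _)

lemma psi_natDegree (Dset : Finset F) (dd : ℕ) (h : Dset.card ≤ dd) :
    (psi Dset dd).natDegree = dd := by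
  rw [psi, Polynomial.Monic.natDegree_mul
    (Polynomial.monic_prod_of_monic _ _ fun a _ => Polynomial.monic_X_sub_C a)
    (Polynomial.monic_X_pow _), Polynomial.natDegree_X_pow,
    Polynomial.natDegree_prod_of_monic _ _ (fun a _ => Polynomial.monic_X_sub_C a)]
  simp only [Polynomial.natDegree_X_sub_C]
  rw [Finset.sum_const, smul_eq_mul, mul_one]
  omega

lemma totalDegree_eval₂_le (q : Polynomial F) (L : MvPolynomial (Fin m) F)
    (hL : L.totalDegree ≤ 1) (b : ℕ) (hq : q.natDegree ≤ b) :
    (q.eval₂ MvPolynomial.C L).totalDegree ≤ b := by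
  rw [Polynomial.eval₂_eq_sum_range]
  refine le_trans (MvPolynomial.totalDegree_finset_sum _ _) ?_
  refine Finset.sup_le fun i hi => ?_
  refine le_trans (MvPolynomial.totalDegree_mul _ _) ?_
  rw [MvPolynomial.totalDegree_C, zero_add]
  refine le_trans (MvPolynomial.totalDegree_pow _ _) ?_
  have : i ≤ b := by
    have := Finset.mem_range.mp hi
    omega
  calc i * L.totalDegree ≤ i * 1 := Nat.mul_le_mul_left i hL
    _ ≤ b := by omega

lemma totalDegree_sub_X_pow (Dset : Finset F) (dd : ℕ) (hdd : 0 < dd)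
    (hcard : Dset.card ≤ dd) (L : MvPolynomial (Fin m) F) (hL : L.totalDegree ≤ 1) :
    ((psi Dset dd).eval₂ MvPolynomial.C L - L ^ dd).totalDegree < dd := by
  have hsub : ((psi Dset dd).eval₂ MvPolynomial.C L - L ^ dd)
      = (psi Dset dd - Polynomial.X ^ dd).eval₂ MvPolynomial.C L := by
    rw [Polynomial.eval₂_sub, Polynomial.eval₂_X_pow]
  rw [hsub]
  by_cases hzero : psi Dset dd - Polynomial.X ^ dd = 0
  · rw [hzero, Polynomial.eval₂_zero]
    simpa using hdd
  · have hdeg : (psi Dset dd - Polynomial.X ^ dd).degree < (psi Dset dd).degree := by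
      refine Polynomial.degree_sub_lt ?_ (psi_monic Dset dd).ne_zero ?_
      · rw [Polynomial.degree_X_pow, Polynomial.degree_eq_natDegree (psi_monic Dset dd).ne_zero,
          psi_natDegree Dset dd hcard]
      · rw [(psi_monic Dset dd).leadingCoeff, Polynomial.leadingCoeff_X_pow]
    rw [Polynomial.degree_eq_natDegree (psi_monic Dset dd).ne_zero, psi_natDegree Dset dd hcard] at hdeg
    have hnd : (psi Dset dd - Polynomial.X ^ dd).natDegree < dd :=
      (Polynomial.natDegree_lt_iff_degree_lt hzero).mpr hdeg
    have := totalDegree_eval₂_le (psi Dset dd - Polynomial.X ^ dd) L hL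
      ((psi Dset dd - Polynomial.X ^ dd).natDegree) le_rfl
    omega

lemma eval_eval₂_psi (Dset : Finset F) (dd : ℕ) (L : MvPolynomial (Fin m) F)
    (t : Fin m → F) :
    MvPolynomial.eval t ((psi Dset dd).eval₂ MvPolynomial.C L)
      = (∏ a ∈ Dset, (MvPolynomial.eval t L - a))
        * (MvPolynomial.eval t L) ^ (dd - Dset.card) := by
  rw [Polynomial.hom_eval₂]
  have hcomp : (MvPolynomial.eval t).comp (MvPolynomial.C (σ := Fin m) (R := F))
      = RingHom.id F := RingHom.ext fun r => MvPolynomial.eval_C r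
  rw [hcomp]
  have : Polynomial.eval₂ (RingHom.id F) (MvPolynomial.eval t L) (psi Dset dd)
      = Polynomial.eval (MvPolynomial.eval t L) (psi Dset dd) := rfl
  rw [this, psi, Polynomial.eval_mul, Polynomial.eval_pow, Polynomial.eval_X,
    Polynomial.eval_prod]
  congr 1
  exact Finset.prod_congr rfl fun a _ => by
    rw [Polynomial.eval_sub, Polynomial.eval_X, Polynomial.eval_C]

lemma totalDegree_L (i j : Fin m) :
    (X i - X j : MvPolynomial (Fin m) F).totalDegree ≤ 1 := by
  rw [sub_eq_add_neg]
  refine le_trans (MvPolynomial.totalDegree_add _ _) ?_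
  rw [MvPolynomial.totalDegree_neg, MvPolynomial.totalDegree_X, MvPolynomial.totalDegree_X]
  exact le_rfl









lemma totalDegree_prod_sub_prod_lt {ι : Type*} (S : Finset ι) (hS : S.Nonempty)
    (g h : ι → MvPolynomial (Fin m) F) (c : ι → ℕ)
    (hg : ∀ x ∈ S, (g x).totalDegree ≤ c x)
    (hgh : ∀ x ∈ S, ((g x) - (h x)).totalDegree < c x) :
    ((∏ x ∈ S, g x) - ∏ x ∈ S, h x).totalDegree < ∑ x ∈ S, c x := by
  classical
  have hh : ∀ x ∈ S, (h x).totalDegree ≤ c x := by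
    intro x hx
    have h1 : h x = g x - (g x - h x) := by ring
    rw [h1, sub_eq_add_neg]
    refine le_trans (MvPolynomial.totalDegree_add _ _) (max_le (hg x hx) ?_)
    rw [MvPolynomial.totalDegree_neg]
    exact le_of_lt (hgh x hx)
  induction hS using Finset.Nonempty.cons_induction with
  | singleton x => simpa using hgh x (Finset.mem_singleton_self x)
  | cons x S hx hS ih =>
    have hgx := hg x (Finset.mem_cons_self x S)
    have hghx := hgh x (Finset.mem_cons_self x S)
    have hhS : (∏ y ∈ S, h y).totalDegree ≤ ∑ y ∈ S, c y :=
      le_trans (MvPolynomial.totalDegree_finset_prod _ _)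
        (Finset.sum_le_sum fun y hy => hh y (Finset.mem_cons_of_mem hy))
    have ihS := ih (fun y hy => hg y (Finset.mem_cons_of_mem hy))
      (fun y hy => hgh y (Finset.mem_cons_of_mem hy))
      (fun y hy => hh y (Finset.mem_cons_of_mem hy))
    rw [Finset.prod_cons, Finset.prod_cons, Finset.sum_cons]
    have halg : g x * ∏ y ∈ S, g y - h x * ∏ y ∈ S, h y
        = g x * ((∏ y ∈ S, g y) - ∏ y ∈ S, h y) + (g x - h x) * ∏ y ∈ S, h y := by
      ring
    rw [halg]
    refine lt_of_le_of_lt (MvPolynomial.totalDegree_add _ _) (max_lt ?_ ?_)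
    · exact lt_of_le_of_lt (MvPolynomial.totalDegree_mul _ _)
        (Nat.add_lt_add_of_le_of_lt hgx ihS)
    · exact lt_of_le_of_lt (MvPolynomial.totalDegree_mul _ _)
        (Nat.add_lt_add_of_lt_of_le hghx hhS)

lemma Qpoly_eq_top (d : ℕ) :
    Qpoly (F := F) Finset.univ (fun _ => d)
      = MvPolynomial.C (((-1 : F) ^ d) ^ (∑ i : Fin m, (Finset.Ioi i).card))
        * ∏ i : Fin m, ∏ j ∈ Finset.Ioi i, (X i - X j) ^ (2 * d) := by
  have h1 : Qpoly (F := F) Finset.univ (fun _ => d)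
      = ∏ i : Fin m, ∏ j ∈ Finset.univ.erase i, (X j - X i) ^ d := by
    rw [Qpoly]
    exact Finset.prod_congr rfl fun i _ => by rw [Cpoly, ← Finset.prod_pow]
  rw [h1]
  have h2 : ∀ i : Fin m, ∏ j ∈ Finset.univ.erase i, ((X j - X i : MvPolynomial (Fin m) F)) ^ d
      = (∏ j ∈ Finset.Ioi i, (X j - X i) ^ d) * ∏ j ∈ Finset.Iio i, (X j - X i) ^ d := by
    intro i
    rw [erase_eq_Ioi_union_Iio, Finset.prod_union (Ioi_disjoint_Iio i)]
  rw [Finset.prod_congr rfl fun i _ => h2 i, Finset.prod_mul_distrib,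
    prod_Iio_swap (fun i j => ((X j - X i : MvPolynomial (Fin m) F)) ^ d),
    ← Finset.prod_mul_distrib]
  have h3 : ∀ i : Fin m, (∏ j ∈ Finset.Ioi i, ((X j - X i : MvPolynomial (Fin m) F)) ^ d)
      * ∏ j ∈ Finset.Ioi i, ((X i - X j : MvPolynomial (Fin m) F)) ^ d
      = (MvPolynomial.C ((-1 : F) ^ d)) ^ (Finset.Ioi i).card
        * ∏ j ∈ Finset.Ioi i, (X i - X j) ^ (2 * d) := by
    intro i
    rw [← Finset.prod_mul_distrib, ← Finset.prod_const, ← Finset.prod_mul_distrib]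
    refine Finset.prod_congr rfl fun j _ => ?_
    rw [← neg_sub (X i) (X j), neg_pow]
    have hC : ((-1 : MvPolynomial (Fin m) F)) ^ d = MvPolynomial.C ((-1 : F) ^ d) := by
      rw [map_pow, map_neg, map_one]
    rw [hC, mul_assoc, ← pow_add, two_mul]
  rw [Finset.prod_congr rfl fun i _ => h3 i, Finset.prod_mul_distrib,
    Finset.prod_pow_eq_pow_sum, ← map_pow]


end KP

open KP MvPolynomial in
theorem stmt_2 (F : Type) [Field F] [DecidableEq F] (m d : ℕ) (hm : 0 < m) (hd : 0 < d)
    (hchar : (((m * d).factorial / d.factorial ^ m : ℕ) : F) ≠ 0)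
    (X T : Fin m → Finset F)
    (hX : ∀ i j : Fin m, i < j → (X i - X j).card ≤ 2 * d)
    (hT : ∀ i, (m - 1) * d + 1 ≤ (T i).card) :
    ∃ t : Fin m → F, (∀ i, t i ∈ T i) ∧
      ∀ i j : Fin m, i ≠ j →
        Disjoint ((X i).image (· + t i)) ((X j).image (· + t j)) := by
  classical
  set S : Finset ((_ : Fin m) × Fin m) := Finset.univ.sigma (fun i => Finset.Ioi i) with hSdef
  set Dset : ((_ : Fin m) × Fin m) → Finset F := fun x => X x.2 - X x.1 with hDsetdef
  set g : ((_ : Fin m) × Fin m) → MvPolynomial (Fin m) F := fun x =>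
    (psi (Dset x) (2 * d)).eval₂ MvPolynomial.C (MvPolynomial.X x.1 - MvPolynomial.X x.2)
    with hgdef
  set h : ((_ : Fin m) × Fin m) → MvPolynomial (Fin m) F := fun x =>
    (MvPolynomial.X x.1 - MvPolynomial.X x.2) ^ (2 * d) with hhdef
  have hmemS : ∀ x ∈ S, x.1 < x.2 := fun x hx =>
    Finset.mem_Ioi.mp (Finset.mem_sigma.mp hx).2
  have hcardD : ∀ x ∈ S, (Dset x).card ≤ 2 * d := by
    intro x hx
    have himg : Dset x = (X x.1 - X x.2).image (fun z => -z) := by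
      ext a
      simp only [hDsetdef, Finset.mem_image, Finset.mem_sub]
      constructor
      · rintro ⟨b, hb, c, hc, rfl⟩
        exact ⟨c - b, ⟨c, hc, b, hb, rfl⟩, neg_sub c b⟩
      · rintro ⟨z, ⟨b, hb, c, hc, rfl⟩, rfl⟩
        exact ⟨c, hc, b, hb, (neg_sub b c).symm ▸ rfl⟩
    rw [himg]
    exact le_trans (Finset.card_image_le) (hX x.1 x.2 (hmemS x hx))
  have hgdeg : ∀ x ∈ S, (g x).totalDegree ≤ 2 * d := fun x hx =>
    totalDegree_eval₂_le _ _ (totalDegree_L x.1 x.2) _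
      (le_of_eq (psi_natDegree (Dset x) (2 * d) (hcardD x hx)))
  have hghdeg : ∀ x ∈ S, ((g x) - (h x)).totalDegree < 2 * d := fun x hx =>
    totalDegree_sub_X_pow (Dset x) (2 * d) (by omega) (hcardD x hx) _ (totalDegree_L x.1 x.2)
  have hNsum : (∑ i : Fin m, (Finset.Ioi i).card) * (2 * d) = m * ((m - 1) * d) := by
    have h2N := two_mul_N (m := m) hm
    calc (∑ i : Fin m, (Finset.Ioi i).card) * (2 * d)
        = (2 * (∑ i : Fin m, (Finset.Ioi i).card)) * d := by ring
      _ = (m * (m - 1)) * d := by rw [h2N]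
      _ = m * ((m - 1) * d) := by ring
  have hSsum : ∑ _x ∈ S, 2 * d = m * ((m - 1) * d) := by
    rw [Finset.sum_const, smul_eq_mul, hSdef, Finset.card_sigma]
    simpa using hNsum
  have hDsum : ∑ _i : Fin m, (m - 1) * d = m * ((m - 1) * d) := by
    rw [Finset.sum_const, Finset.card_univ, Fintype.card_fin, smul_eq_mul]
  set Dfin : Fin m →₀ ℕ := Finsupp.equivFunOnFinite.symm (fun _ => (m - 1) * d) with hDfin
  have hmusum : ∑ i : Fin m, (fun _ : Fin m => d) i = m * d := by
    rw [Finset.sum_const, Finset.card_univ, Fintype.card_fin, smul_eq_mul]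
  have hmuD : mu Finset.univ (fun _ => d) = Dfin := by
    ext t
    rw [mu_apply, if_pos (Finset.mem_univ t), hmusum]
    show m * d - d = (m - 1) * d
    rw [Nat.sub_one_mul]
  -- the coefficient of the top part is nonzero
  have hmultinom : Nat.multinomial Finset.univ (fun _ : Fin m => d)
      = (m * d).factorial / d.factorial ^ m := by
    rw [Nat.multinomial, hmusum, Finset.prod_const, Finset.card_univ, Fintype.card_fin]
  have htop : MvPolynomial.coeff Dfin (∏ x ∈ S, h x) ≠ 0 := by
    have hdys := dyson_coeff (F := F)
      ((∑ i ∈ Finset.univ, (fun _ : Fin m => d) i) + (Finset.univ : Finset (Fin m)).card)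
      Finset.univ (fun _ => d) le_rfl
    rw [hmuD, Qpoly_eq_top d, hmultinom] at hdys
    have hprodS : (∏ i : Fin m, ∏ j ∈ Finset.Ioi i,
        (MvPolynomial.X i - MvPolynomial.X j : MvPolynomial (Fin m) F) ^ (2 * d))
        = ∏ x ∈ S, h x := by
      rw [hSdef, Finset.prod_sigma]
    rw [hprodS, MvPolynomial.coeff_C_mul] at hdys
    intro h0
    rw [h0, mul_zero] at hdys
    exact hchar hdys.symm
  have hDfinsum : ∑ t ∈ Dfin.support, Dfin t = m * ((m - 1) * d) := by
    have hss : ∑ t ∈ Dfin.support, Dfin t = ∑ t : Fin m, Dfin t :=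
      Finset.sum_subset (Finset.subset_univ _)
        (fun t _ ht => Finsupp.notMem_support_iff.mp ht)
    rw [hss]
    exact hDsum
  have hcoefff : MvPolynomial.coeff Dfin (∏ x ∈ S, g x)
      = MvPolynomial.coeff Dfin (∏ x ∈ S, h x) := by
    rcases S.eq_empty_or_nonempty with hSe | hSne
    · rw [hSe, Finset.prod_empty, Finset.prod_empty]
    · have hlt := totalDegree_prod_sub_prod_lt S hSne g h (fun _ => 2 * d) hgdeg hghdeg
      rw [hSsum] at hlt
      have h0 : MvPolynomial.coeff Dfin ((∏ x ∈ S, g x) - ∏ x ∈ S, h x) = 0 := by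
        apply MvPolynomial.coeff_eq_zero_of_totalDegree_lt
        rw [hDfinsum]
        exact hlt
      rw [MvPolynomial.coeff_sub, sub_eq_zero] at h0
      exact h0
  have hdegf : (∏ x ∈ S, g x).totalDegree ≤ ∑ i : Fin m, (m - 1) * d := by
    refine le_trans (MvPolynomial.totalDegree_finset_prod _ _) ?_
    refine le_trans (Finset.sum_le_sum hgdeg) ?_
    rw [hSsum, hDsum]
  obtain ⟨t, htmem, hteval⟩ := CN (fun _ => (m - 1) * d) T hT (∏ x ∈ S, g x) hdegf
    (by rw [← hDfin, hcoefff]; exact htop)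
  refine ⟨t, htmem, ?_⟩
  have key : ∀ i j : Fin m, i < j →
      Disjoint ((X i).image (· + t i)) ((X j).image (· + t j)) := by
    intro i j hlt
    have hxS : (⟨i, j⟩ : (_ : Fin m) × Fin m) ∈ S :=
      Finset.mem_sigma.mpr ⟨Finset.mem_univ _, Finset.mem_Ioi.mpr hlt⟩
    have hgne : MvPolynomial.eval t (g ⟨i, j⟩) ≠ 0 := by
      intro h0
      exact hteval (by rw [map_prod]; exact Finset.prod_eq_zero hxS h0)
    rw [hgdef] at hgne
    rw [eval_eval₂_psi] at hgne
    have hv : MvPolynomial.eval t (MvPolynomial.X i - MvPolynomial.X j) = t i - t j := by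
      simp
    rw [Finset.disjoint_left]
    rintro u hu hu'
    obtain ⟨x₁, hx₁, hx₁u⟩ := Finset.mem_image.mp hu
    obtain ⟨y₁, hy₁, hy₁u⟩ := Finset.mem_image.mp hu'
    have haD : y₁ - x₁ ∈ Dset ⟨i, j⟩ := by
      rw [hDsetdef]
      exact Finset.sub_mem_sub hy₁ hx₁
    have hzf : MvPolynomial.eval t (MvPolynomial.X i - MvPolynomial.X j) - (y₁ - x₁) = 0 := by
      rw [hv]
      have h1 : x₁ + t i = u := hx₁u
      have h2 : y₁ + t j = u := hy₁u
      linear_combination h1 - h2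
    exact hgne (by rw [Finset.prod_eq_zero haD hzf, zero_mul])
  intro i j hij
  rcases lt_or_gt_of_ne hij with hlt | hgt
  · exact key i j hlt
  · exact (key j i hgt).symm
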